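/- For every real α > −1/2 and every x > 0, the Bessel function of the first kind satisfies the pointwise bound |J_α(x)| ≤ (x/2)^α / Γ(α+1). -/

import Mathlib

open MeasureTheory Real

lemma realBeta_integrable {a b : ℝ} (ha : 0 < a) (hb : 0 < b) :
    IntegrableOn (fun u : ℝ => u ^ (a - 1) * (1 - u) ^ (b - 1)) (Set.Ioc 0 1) := by
  have h := Complex.betaIntegral_convergent (u := (a : ℂ)) (v := (b : ℂ)) (by simpa) (by simpa)
  rw [intervalIntegrable_iff_integrableOn_Ioc_of_le zero_le_one] at h
  have hre : IntegrableOn (fun u : ℝ => RCLike.re ((u:ℂ) ^ ((a:ℂ) - 1) * (1 - (u:ℂ)) ^ ((b:ℂ) - 1))) (Set.Ioc 0 1) := h.re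
  refine (hre.congr_fun (fun u hu => ?_) measurableSet_Ioc)
  have hu0 : (0:ℝ) ≤ u := hu.1.le
  have hu1 : (0:ℝ) ≤ 1 - u := by linarith [hu.2]
  have e1 : ((u:ℂ)) ^ ((a:ℂ) - 1) = ((u ^ (a-1) : ℝ) : ℂ) := by
    rw [Complex.ofReal_cpow hu0]; push_cast; ring_nf
  have e2 : ((1:ℂ) - u) ^ ((b:ℂ) - 1) = (((1-u) ^ (b-1) : ℝ) : ℂ) := by
    rw [Complex.ofReal_cpow hu1]; push_cast; ring_nf
  simp [e1, e2, ← Complex.ofReal_mul]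

lemma realBeta_eq {a b : ℝ} (ha : 0 < a) (hb : 0 < b) :
    ∫ u in Set.Ioc (0:ℝ) 1, u ^ (a - 1) * (1 - u) ^ (b - 1) =
      Gamma a * Gamma b / Gamma (a + b) := by
  have h := Complex.Gamma_mul_Gamma_eq_betaIntegral (s := (a : ℂ)) (t := (b : ℂ))
    (by simpa) (by simpa)
  have hB : Complex.betaIntegral a b =
      ((∫ u in Set.Ioc (0:ℝ) 1, u ^ (a - 1) * (1 - u) ^ (b - 1) : ℝ) : ℂ) := by
    rw [Complex.betaIntegral, intervalIntegral.integral_of_le zero_le_one]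
    refine (setIntegral_congr_fun measurableSet_Ioc (fun u hu => ?_)).trans integral_ofReal
    have hu0 : (0:ℝ) ≤ u := hu.1.le
    have hu1 : (0:ℝ) ≤ 1 - u := by linarith [hu.2]
    have e1 : ((u:ℂ)) ^ ((a:ℂ) - 1) = ((u ^ (a-1) : ℝ) : ℂ) := by
      rw [Complex.ofReal_cpow hu0]; push_cast; ring_nf
    have e2 : ((1:ℂ) - u) ^ ((b:ℂ) - 1) = (((1-u) ^ (b-1) : ℝ) : ℂ) := by
      rw [Complex.ofReal_cpow hu1]; push_cast; ring_nf
    simp [e1, e2]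
  rw [hB] at h
  have hab : Gamma (a + b) ≠ 0 := (Gamma_pos_of_pos (by linarith)).ne'
  have : Gamma a * Gamma b = Gamma (a+b) * ∫ u in Set.Ioc (0:ℝ) 1, u ^ (a-1) * (1-u) ^ (b-1) := by
    have := h
    rw [← Complex.ofReal_add, Complex.Gamma_ofReal, Complex.Gamma_ofReal,
      Complex.Gamma_ofReal] at this
    exact_mod_cast this
  rw [this]; field_simp

/-- The Bessel function of the first kind `J_ν`, defined for `x > 0` by its power series
`J_ν(x) = Σ_{m=0}^∞ (−1)^m (x/2)^{2m+ν} / (m! Γ(m+ν+1))`, where `1/Γ` vanishes at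
nonpositive integers (as does Mathlib's `Real.Gamma`). -/
noncomputable def besselJ (ν : ℝ) (x : ℝ) : ℝ :=
  ∑' m : ℕ, (-1 : ℝ) ^ m * (x / 2) ^ (2 * (m : ℝ) + ν) /
    ((m.factorial : ℝ) * Real.Gamma ((m : ℝ) + ν + 1))

/-- For `α > −1/2` and `x > 0`, `|J_α(x)| ≤ (x/2)^α / Γ(α+1)`. -/
theorem besselJ_pointwise_bound (α : ℝ) (hα : -(1 / 2 : ℝ) < α) (x : ℝ) (hx : 0 < x) :
    |besselJ α x| ≤ (x / 2) ^ α / Real.Gamma (α + 1) := by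
  have hβ0 : 0 < α + 1/2 := by linarith
  set β : ℝ := α + 1/2 with hβ
  have hα1 : (0:ℝ) < α + 1 := by linarith
  set c : ℕ → ℝ := fun m => (-1)^m * x^(2*m) / (2*m).factorial with hc
  set F : ℕ → ℝ → ℝ := fun m u => c m * (u ^ ((m:ℝ) + 1/2 - 1) * (1-u) ^ (β-1)) with hF
  have hmhalf : ∀ m : ℕ, (0:ℝ) < (m:ℝ) + 1/2 := fun m => by positivity
  -- integrability
  have hint : ∀ m, IntegrableOn (F m) (Set.Ioc 0 1) := fun m =>
    (realBeta_integrable (hmhalf m) hβ0).const_mul (c m)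
  -- value of each integral
  have hval : ∀ m, ∫ u in Set.Ioc (0:ℝ) 1, F m u
      = c m * (Gamma ((m:ℝ) + 1/2) * Gamma β / Gamma ((m:ℝ) + α + 1)) := by
    intro m
    rw [hF]
    rw [integral_const_mul, realBeta_eq (hmhalf m) hβ0]
    congr 2
    push_cast; rw [hβ]; ring
  -- bound on each integral of norm
  have hB0int := realBeta_integrable (a := 1/2) (by norm_num) hβ0
  set B0 : ℝ := ∫ u in Set.Ioc (0:ℝ) 1, u ^ ((1:ℝ)/2 - 1) * (1-u) ^ (β-1) with hB0
  have hnorm_le : ∀ m, (∫ u in Set.Ioc (0:ℝ) 1, ‖F m u‖) ≤ |c m| * B0 := by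
    intro m
    rw [hB0, ← integral_const_mul]
    refine setIntegral_mono_on (hint m).norm (hB0int.const_mul _) measurableSet_Ioc
      (fun u hu => ?_)
    have hu0 : (0:ℝ) < u := hu.1
    have hu1 : (0:ℝ) ≤ 1 - u := by linarith [hu.2]
    have h1 : u ^ ((m:ℝ) + 1/2 - 1) ≤ u ^ ((1:ℝ)/2 - 1) :=
      rpow_le_rpow_of_exponent_ge hu0 hu.2 (by { have : (0:ℝ) ≤ (m:ℝ) := m.cast_nonneg; linarith })
    have h2 : (0:ℝ) ≤ (1-u) ^ (β-1) := rpow_nonneg hu1 _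
    have h3 : (0:ℝ) ≤ u ^ ((m:ℝ) + 1/2 - 1) := rpow_nonneg hu0.le _
    calc ‖F m u‖ = |c m| * (u ^ ((m:ℝ) + 1/2 - 1) * (1-u) ^ (β-1)) := by
          rw [hF, Real.norm_eq_abs, abs_mul, abs_of_nonneg (mul_nonneg h3 h2)]
      _ ≤ |c m| * (u ^ ((1:ℝ)/2 - 1) * (1-u) ^ (β-1)) := by
          apply mul_le_mul_of_nonneg_left (mul_le_mul_of_nonneg_right h1 h2) (abs_nonneg _)
  have hcabs : ∀ m, |c m| ≤ (x^2)^m / (m.factorial : ℝ) := by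
    intro m
    rw [hc]
    have h1 : |(-1:ℝ)^m * x^(2*m) / (2*m).factorial| = x^(2*m) / (2*m).factorial := by
      rw [abs_div, abs_mul, abs_pow, abs_neg, abs_one, one_pow, one_mul,
        abs_of_nonneg (pow_nonneg hx.le _), abs_of_nonneg (by positivity)]
    rw [h1, pow_mul x 2 m]
    have hle : (m.factorial : ℝ) ≤ ((2*m).factorial : ℝ) :=
      by exact_mod_cast Nat.factorial_le (by omega : m ≤ 2*m)
    gcongr
  have hB0nonneg : 0 ≤ B0 := by
    rw [hB0]
    refine setIntegral_nonneg measurableSet_Ioc (fun u hu => ?_)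
    exact mul_nonneg (rpow_nonneg hu.1.le _) (rpow_nonneg (by linarith [hu.2] : (0:ℝ) ≤ 1-u) _)
  -- summability of ∫‖F m‖
  have hsum : Summable fun m => ∫ u in Set.Ioc (0:ℝ) 1, ‖F m u‖ := by
    refine Summable.of_nonneg_of_le
      (fun m => integral_nonneg (fun u => norm_nonneg _))
      (fun m => (hnorm_le m).trans
        (mul_le_mul_of_nonneg_right (hcabs m) hB0nonneg))
      (((Real.summable_pow_div_factorial (x^2)).mul_right B0))
  -- swap sum and integral
  have hswap := MeasureTheory.integral_tsum_of_summable_integral_norm hint hsum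
  -- pointwise sum
  have hpt : ∀ u ∈ Set.Ioc (0:ℝ) 1, (∑' m, F m u)
      = Real.cos (x * Real.sqrt u) * (u ^ ((1:ℝ)/2 - 1) * (1-u) ^ (β-1)) := by
    intro u hu
    have hu0 : (0:ℝ) < u := hu.1
    have hs := (Real.hasSum_cos (x * Real.sqrt u)).mul_right
      (u ^ ((1:ℝ)/2 - 1) * (1-u) ^ (β-1))
    have heq : ∀ m : ℕ, ((-1:ℝ)^m * (x * Real.sqrt u)^(2*m) / (2*m).factorial)
        * (u ^ ((1:ℝ)/2 - 1) * (1-u) ^ (β-1)) = F m u := by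
      intro m
      have hsq : (Real.sqrt u)^(2*m) = u^m := by
        rw [pow_mul, Real.sq_sqrt hu0.le]
      have hpow : (u:ℝ)^(m:ℕ) * u ^ ((1:ℝ)/2 - 1) = u ^ ((m:ℝ) + 1/2 - 1) := by
        rw [← rpow_natCast u m, ← rpow_add hu0]
        ring_nf
      have hFm : F m u = ((-1:ℝ)^m * (x^(2*m) * u^m) / (2*m).factorial)
          * (u ^ ((1:ℝ)/2 - 1) * (1-u) ^ (β-1)) := by
        simp only [hF, hc]
        rw [← hpow]; ring
      rw [hFm, mul_pow x (Real.sqrt u) (2*m), hsq]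
    calc ∑' m, F m u
        = ∑' m, ((-1:ℝ)^m * (x * Real.sqrt u)^(2*m) / (2*m).factorial)
            * (u ^ ((1:ℝ)/2 - 1) * (1-u) ^ (β-1)) := tsum_congr fun m => (heq m).symm
      _ = _ := hs.tsum_eq
  have hIeq : ∫ u in Set.Ioc (0:ℝ) 1, (∑' m, F m u)
      = ∫ u in Set.Ioc (0:ℝ) 1, Real.cos (x * Real.sqrt u) * (u ^ ((1:ℝ)/2 - 1) * (1-u) ^ (β-1)) :=
    setIntegral_congr_fun measurableSet_Ioc hpt
  -- bound on the cosine integral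
  have hsqrtpi : (0:ℝ) < √π := Real.sqrt_pos.mpr Real.pi_pos
  have hΓβ : (0:ℝ) < Gamma β := Gamma_pos_of_pos hβ0
  have hcosint : IntegrableOn
      (fun u : ℝ => Real.cos (x * Real.sqrt u) * (u ^ ((1:ℝ)/2 - 1) * (1-u) ^ (β-1)))
      (Set.Ioc 0 1) := by
    refine hB0int.bdd_mul (c := 1) ?_ (ae_of_all _ fun u => by
      simpa using Real.abs_cos_le_one (x * Real.sqrt u))
    exact (Real.continuous_cos.comp
      (continuous_const.mul Real.continuous_sqrt)).aestronglyMeasurable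
  have hcos_bound :
      |∫ u in Set.Ioc (0:ℝ) 1, Real.cos (x * Real.sqrt u) * (u ^ ((1:ℝ)/2 - 1) * (1-u) ^ (β-1))|
        ≤ B0 := by
    have hn := norm_integral_le_integral_norm (μ := volume.restrict (Set.Ioc 0 1))
      (f := fun u : ℝ => Real.cos (x * Real.sqrt u) * (u ^ ((1:ℝ)/2 - 1) * (1-u) ^ (β-1)))
    simp only [Real.norm_eq_abs] at hn
    refine hn.trans ?_
    rw [hB0]
    refine setIntegral_mono_on hcosint.abs hB0int measurableSet_Ioc (fun u hu => ?_)
    have hu0 : (0:ℝ) ≤ u := hu.1.le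
    have hu1 : (0:ℝ) ≤ 1 - u := by linarith [hu.2]
    have hg : (0:ℝ) ≤ u ^ ((1:ℝ)/2 - 1) * (1-u) ^ (β-1) :=
      mul_nonneg (rpow_nonneg hu0 _) (rpow_nonneg hu1 _)
    simp only [abs_mul, abs_of_nonneg hg]
    exact mul_le_of_le_one_left hg (Real.abs_cos_le_one _)
  -- Gamma at half-integers
  have hgamma_half : ∀ m : ℕ, Gamma ((m:ℝ) + 1/2) * (m.factorial : ℝ)
      = ((2*m).factorial : ℝ) * (((2:ℝ)^(2*m))⁻¹) * √π := by
    intro m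
    have h := Real.Gamma_mul_Gamma_add_half ((m:ℝ) + 1/2)
    have e1 : (m:ℝ) + 1/2 + 1/2 = (m:ℝ) + 1 := by ring
    have e2 : 2 * ((m:ℝ) + 1/2) = ((2*m : ℕ) : ℝ) + 1 := by push_cast; ring
    have e3 : (1 : ℝ) - (((2*m : ℕ) : ℝ) + 1) = -((2*m : ℕ) : ℝ) := by push_cast; ring
    rw [e1, e2, e3, Real.Gamma_nat_eq_factorial, Real.Gamma_nat_eq_factorial,
      rpow_neg (by norm_num : (0:ℝ) ≤ 2), rpow_natCast] at h
    exact h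
  -- each Bessel series term in integral form
  set D : ℝ := (x/2) ^ α / (√π * Gamma β) with hD
  have hx2 : (0:ℝ) < x/2 := by linarith
  have hterm : ∀ m : ℕ, (-1 : ℝ) ^ m * (x / 2) ^ (2 * (m : ℝ) + α) /
      ((m.factorial : ℝ) * Real.Gamma ((m : ℝ) + α + 1))
      = D * ∫ u in Set.Ioc (0:ℝ) 1, F m u := by
    intro m
    rw [hval m, hD, hc]
    have hGm : (0:ℝ) < Gamma ((m:ℝ) + α + 1) :=
      Gamma_pos_of_pos (by have : (0:ℝ) ≤ (m:ℝ) := m.cast_nonneg; linarith)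
    have h1 : (x/2 : ℝ) ^ (2*(m:ℝ) + α) = (x/2)^(2*m : ℕ) * (x/2) ^ α := by
      rw [← rpow_natCast (x/2) (2*m), ← rpow_add hx2]
      push_cast; ring_nf
    rw [h1, div_pow]
    have hfm : ((m.factorial : ℝ)) ≠ 0 := by positivity
    have h2m : (((2*m).factorial : ℝ)) ≠ 0 := by positivity
    have hp : ((2:ℝ)^(2*m)) ≠ 0 := by positivity
    have hGh : Gamma ((m:ℝ) + 1/2)
        = ((2*m).factorial : ℝ) * (((2:ℝ)^(2*m))⁻¹) * √π / (m.factorial : ℝ) := by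
      rw [eq_div_iff hfm]; exact hgamma_half m
    rw [hGh]
    field_simp
  -- assemble
  have hbessel : besselJ α x = D *
      ∫ u in Set.Ioc (0:ℝ) 1, Real.cos (x * Real.sqrt u) *
        (u ^ ((1:ℝ)/2 - 1) * (1-u) ^ (β-1)) := by
    rw [besselJ]
    calc (∑' m : ℕ, (-1 : ℝ) ^ m * (x / 2) ^ (2 * (m : ℝ) + α) /
          ((m.factorial : ℝ) * Real.Gamma ((m : ℝ) + α + 1)))
        = ∑' m : ℕ, D * ∫ u in Set.Ioc (0:ℝ) 1, F m u := tsum_congr hterm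
      _ = D * ∑' m : ℕ, ∫ u in Set.Ioc (0:ℝ) 1, F m u := tsum_mul_left
      _ = _ := by rw [hswap, hIeq]
  rw [hbessel, abs_mul]
  have hDnon : 0 ≤ D := by
    rw [hD]; positivity
  have hDB : |D| * B0 ≤ (x/2) ^ α / Gamma (α+1) := by
    rw [abs_of_nonneg hDnon, hD, hB0, realBeta_eq (by norm_num) hβ0]
    have e4 : (1:ℝ)/2 + β = α + 1 := by rw [hβ]; ring
    rw [e4, Real.Gamma_one_half_eq]
    have hΓα1 : (0:ℝ) < Gamma (α+1) := Gamma_pos_of_pos hα1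
    rw [div_mul_div_comm]
    apply le_of_eq
    field_simp
  calc |D| * |_| ≤ |D| * B0 := mul_le_mul_of_nonneg_left hcos_bound (abs_nonneg _)
    _ ≤ _ := hDB
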